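/- (Theorem 2(I), contrapositive form.) Let H be a Hermitian tensor that has a positive Hermitian decomposition. Then for every integer k ≥ m+1 the semidefinite relaxation (16) is feasible: there exists a truncated moment sequence z : {α ∈ ℕ^{2n} : |α| ≤ 2k} → ℝ such that M_k(z) ⪰ 0, L_{h_i}^{(k)}(z) = 0 for every i ∈ [m] where h_i(x) = ‖x^{(i)}‖² − 1, and Re(H I J) = L_z(R_{IJ}), Im(H I J) = L_z(T_{IJ}) for all multi-indices I, J. (Hence, if the relaxation is infeasible for some k, then H has no positive Hermitian decomposition, i.e., the corresponding mixed state is not separable.) -/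

import Mathlib

/-- The coordinate index set of `ℝ^{2n}`, `n = n₁ + ⋯ + n_m`. -/
abbrev CoordIdx (m : ℕ) (n : Fin m → ℕ) : Type := Σ k : Fin m, Fin (n k) × Fin 2

/-- The complex vector `u^{(k)}(x) = x_Re^{(k)} + i·x_Im^{(k)} ∈ ℂ^{n_k}`. -/
noncomputable def uC (m : ℕ) (n : Fin m → ℕ) (x : CoordIdx m n → ℝ)
    (k : Fin m) (j : Fin (n k)) : ℂ :=
  (x ⟨k, (j, 0)⟩ : ℝ) + Complex.I * (x ⟨k, (j, 1)⟩ : ℝ)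

/-- `P_{IJ}(x) = Π_k u^{(k)}(x)(I k) · conj(u^{(k)}(x)(J k))`. -/
noncomputable def Pfun (m : ℕ) (n : Fin m → ℕ)
    (I J : ∀ k : Fin m, Fin (n k)) (x : CoordIdx m n → ℝ) : ℂ :=
  ∏ k, uC m n x k (I k) * (starRingEnd ℂ) (uC m n x k (J k))

/-- The sphere polynomial `h_i(x) = ‖x^{(i)}‖² − 1`. -/
noncomputable def spherePoly (m : ℕ) (n : Fin m → ℕ) (i : Fin m) :
    MvPolynomial (CoordIdx m n) ℝ :=
  (∑ j : Fin (n i) × Fin 2, MvPolynomial.X (⟨i, j⟩ : CoordIdx m n) ^ 2) - 1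

/-- The Riesz functional `L_z(p) = Σ_α p_α z_α`. -/
noncomputable def riesz {V : Type*} (z : (V → ℕ) → ℝ) (p : MvPolynomial V ℝ) : ℝ :=
  ∑ γ ∈ p.support, MvPolynomial.coeff γ p * z ⇑γ

lemma aux_quad {ι κ : Type*} [Fintype ι] [Fintype κ]
    (lam : ι → ℝ) (w : ι → κ → ℝ) (y : κ → ℝ) :
    ∑ α, y α * ∑ β, (∑ i, lam i * (w i α * w i β)) * y β
      = ∑ i, lam i * (∑ α, y α * w i α) ^ 2 := by
  calc ∑ α, y α * ∑ β, (∑ i, lam i * (w i α * w i β)) * y β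
      = ∑ α, ∑ β, ∑ i, lam i * ((y α * w i α) * (y β * w i β)) := by
        refine Finset.sum_congr rfl fun α _ => ?_
        rw [Finset.mul_sum]
        refine Finset.sum_congr rfl fun β _ => ?_
        rw [Finset.sum_mul, Finset.mul_sum]
        refine Finset.sum_congr rfl fun i _ => ?_
        ring
    _ = ∑ α, ∑ i, ∑ β, lam i * ((y α * w i α) * (y β * w i β)) :=
        Finset.sum_congr rfl fun α _ => Finset.sum_comm
    _ = ∑ i, ∑ α, ∑ β, lam i * ((y α * w i α) * (y β * w i β)) :=
        Finset.sum_comm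
    _ = ∑ i, lam i * (∑ α, y α * w i α) ^ 2 := by
        refine Finset.sum_congr rfl fun i _ => ?_
        rw [sq, Finset.sum_mul_sum, Finset.mul_sum]
        exact Finset.sum_congr rfl fun α _ => (Finset.mul_sum _ _ _).symm

set_option maxHeartbeats 1000000 in
/-- Theorem 2(I), contrapositive form: if a Hermitian tensor `H` has a
positive Hermitian decomposition, then for every `k ≥ m + 1` the semidefinite
relaxation (16) is feasible: some truncated moment sequence `z` on `|α| ≤ 2k` has
`M_k(z) ⪰ 0`, `L_{h_i}^{(k)}(z) = 0` for all `i ∈ [m]`, and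
`Re(H I J) = L_z(R_{IJ})`, `Im(H I J) = L_z(T_{IJ})` for all `I, J`. -/
theorem relaxation_feasible_of_posHermitianDecomp (m : ℕ) (n : Fin m → ℕ)
    (H : (∀ k : Fin m, Fin (n k)) → (∀ k : Fin m, Fin (n k)) → ℂ)
    (hH : ∀ I J, H I J = (starRingEnd ℂ) (H J I))
    (R T : (∀ k : Fin m, Fin (n k)) → (∀ k : Fin m, Fin (n k)) →
      MvPolynomial (CoordIdx m n) ℝ)
    (hdegR : ∀ I J, (R I J).totalDegree ≤ 2 * m)
    (hdegT : ∀ I J, (T I J).totalDegree ≤ 2 * m)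
    (hRT : ∀ I J (x : CoordIdx m n → ℝ), Pfun m n I J x =
      (MvPolynomial.eval x (R I J) : ℂ) + Complex.I * (MvPolynomial.eval x (T I J) : ℂ))
    (hdecomp : ∃ (r : ℕ) (lam : Fin r → ℝ) (u : Fin r → ∀ k : Fin m, Fin (n k) → ℂ),
      (∀ i, 0 < lam i) ∧ (∀ i k, ∑ j, Complex.normSq (u i k j) = 1) ∧
      ∀ I J, H I J = ∑ i, (lam i : ℂ) * ∏ k, u i k (I k) * (starRingEnd ℂ) (u i k (J k))) :
    ∀ t : ℕ, m + 1 ≤ t → ∃ z : (CoordIdx m n → ℕ) → ℝ,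
      Matrix.PosSemidef (Matrix.of
        fun α β : {a : CoordIdx m n → Fin (t + 1) // (∑ v, (a v : ℕ)) ≤ t} =>
          z (fun v => (α.1 v : ℕ) + (β.1 v : ℕ))) ∧
      (∀ i : Fin m, ∀ α β : CoordIdx m n → ℕ,
        (∑ v, α v) ≤ t - 1 → (∑ v, β v) ≤ t - 1 →
        (∑ γ ∈ (spherePoly m n i).support, MvPolynomial.coeff γ (spherePoly m n i) *
          z (fun v => α v + β v + γ v)) = 0) ∧
      ∀ I J, (H I J).re = riesz z (R I J) ∧ (H I J).im = riesz z (T I J) := by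
  classical
  obtain ⟨r, lam, u, hlam, hunit, hHdec⟩ := hdecomp
  intro t ht
  set x : Fin r → CoordIdx m n → ℝ := fun i v =>
    if v.2.2 = 0 then (u i v.1 v.2.1).re else (u i v.1 v.2.1).im with hxdef
  have hu : ∀ i k j, uC m n (x i) k j = u i k j := by
    intro i k j
    simp only [uC, hxdef]
    norm_num
    apply Complex.ext <;> simp
  set A : Fin r → (CoordIdx m n → ℕ) → ℝ := fun i α => ∏ v, x i v ^ α v with hAdef
  set z : (CoordIdx m n → ℕ) → ℝ := fun α => ∑ i, lam i * A i α with hzdef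
  have hAadd : ∀ i (α β : CoordIdx m n → ℕ),
      A i (fun v => α v + β v) = A i α * A i β := by
    intro i α β; simp [hAdef, pow_add, Finset.prod_mul_distrib]
  have hloc : ∀ (p : MvPolynomial (CoordIdx m n) ℝ) (c : Fin r → ℝ),
      (∑ γ ∈ p.support, MvPolynomial.coeff γ p * (∑ j, c j * A j ⇑γ))
        = ∑ j, c j * MvPolynomial.eval (x j) p := by
    intro p c
    calc ∑ γ ∈ p.support, MvPolynomial.coeff γ p * (∑ j, c j * A j ⇑γ)
        = ∑ γ ∈ p.support, ∑ j, c j * (MvPolynomial.coeff γ p * A j ⇑γ) := by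
          refine Finset.sum_congr rfl fun γ _ => ?_
          rw [Finset.mul_sum]
          exact Finset.sum_congr rfl fun j _ => by ring
      _ = ∑ j, ∑ γ ∈ p.support, c j * (MvPolynomial.coeff γ p * A j ⇑γ) :=
          Finset.sum_comm
      _ = ∑ j, c j * ∑ γ ∈ p.support, MvPolynomial.coeff γ p * A j ⇑γ := by
          simp [Finset.mul_sum]
      _ = ∑ j, c j * MvPolynomial.eval (x j) p := by
          refine Finset.sum_congr rfl fun j _ => ?_
          rw [MvPolynomial.eval_eq']
  have heval : ∀ (i : Fin m) (j : Fin r),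
      MvPolynomial.eval (x j) (spherePoly m n i) = 0 := by
    intro i j
    simp only [spherePoly, map_sub, map_sum, map_pow, MvPolynomial.eval_X, map_one]
    rw [Fintype.sum_prod_type]
    have : ∀ a : Fin (n i), ∑ p : Fin 2, x j ⟨i, (a, p)⟩ ^ 2
        = Complex.normSq (u j i a) := by
      intro a
      rw [Fin.sum_univ_two]
      simp [hxdef, Complex.normSq_apply, sq]
    rw [Finset.sum_congr rfl fun a _ => this a, hunit j i]
    ring
  refine ⟨z, ?_, ?_, ?_⟩
  · rw [Matrix.posSemidef_iff_dotProduct_mulVec]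
    constructor
    · show _ = _
      ext α β
      simp only [Matrix.conjTranspose_apply, Matrix.of_apply, star_trivial]
      congr 1
      funext v
      ring
    · intro y
      have key : dotProduct (star y) (Matrix.mulVec (Matrix.of
          fun α β : {a : CoordIdx m n → Fin (t + 1) // (∑ v, (a v : ℕ)) ≤ t} =>
            z (fun v => (α.1 v : ℕ) + (β.1 v : ℕ))) y)
          = ∑ i, lam i * (∑ α : {a : CoordIdx m n → Fin (t + 1) // (∑ v, (a v : ℕ)) ≤ t},
              y α * A i (fun v => (α.1 v : ℕ))) ^ 2 := by
        simp only [dotProduct, Matrix.mulVec, Matrix.of_apply, Pi.star_apply,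
          star_trivial, hzdef]
        rw [← aux_quad lam (fun i (α : {a : CoordIdx m n → Fin (t + 1) //
          (∑ v, (a v : ℕ)) ≤ t}) => A i fun v => (α.1 v : ℕ)) y]
        refine Finset.sum_congr rfl fun α _ => ?_
        congr 1
        refine Finset.sum_congr rfl fun β _ => ?_
        congr 1
        exact Finset.sum_congr rfl fun i _ => by rw [hAadd]
      rw [key]
      exact Finset.sum_nonneg fun i _ =>
        mul_nonneg (hlam i).le (sq_nonneg _)
  · intro i α β _ _
    have : ∀ γ : CoordIdx m n →₀ ℕ, z (fun v => α v + β v + γ v)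
        = ∑ j, (lam j * (A j α * A j β)) * A j ⇑γ := by
      intro γ
      simp only [hzdef]
      refine Finset.sum_congr rfl fun j _ => ?_
      have h1 : A j (fun v => α v + β v + γ v)
          = A j (fun v => α v + β v) * A j ⇑γ := hAadd j (fun v => α v + β v) ⇑γ
      rw [h1, hAadd]
      ring
    rw [Finset.sum_congr rfl fun γ _ => by rw [this γ], hloc]
    simp [heval]
  · intro I J
    have hH' : H I J = ∑ i, (lam i : ℂ) *
        ((MvPolynomial.eval (x i) (R I J) : ℝ) +
          Complex.I * (MvPolynomial.eval (x i) (T I J) : ℝ)) := by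
      rw [hHdec]
      refine Finset.sum_congr rfl fun i _ => ?_
      congr 1
      rw [← hRT I J (x i)]
      unfold Pfun
      refine Finset.prod_congr rfl fun k _ => ?_
      rw [hu, hu]
    constructor
    · rw [hH', Complex.re_sum, riesz, hloc]
      refine Finset.sum_congr rfl fun i _ => ?_
      simp [Complex.mul_re, Complex.add_re, Complex.add_im, Complex.mul_im]
    · rw [hH', Complex.im_sum, riesz, hloc]
      refine Finset.sum_congr rfl fun i _ => ?_
      simp [Complex.mul_re, Complex.add_re, Complex.add_im, Complex.mul_im]
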